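/- The intersection of any two parabolic subgroups of W is a parabolic subgroup of W. -/

import Mathlib

open scoped Classical

namespace DGM

open CoxeterSystem List

variable {S : Type*} {W : Type*} [Group W] {M : CoxeterMatrix S}

variable (cs : CoxeterSystem M W)

/-- Key dihedral identity: since `(s i * s i')^(M i i') = 1`, alternating words of
lengths `M i i' + k` factor. -/
lemma wordProd_alternatingWord_add (i i' : S) (k : ℕ) :
    cs.wordProd (alternatingWord i i' (M i i' + k)) =
      cs.wordProd (alternatingWord i i' (M i i')) * cs.wordProd (alternatingWord i i' k) := by
  set m := M i i' with hm
  have hrel : (cs.simple i * cs.simple i') ^ m = 1 := cs.simple_mul_simple_pow i i'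
  rw [cs.prod_alternatingWord_eq_mul_pow, cs.prod_alternatingWord_eq_mul_pow,
    cs.prod_alternatingWord_eq_mul_pow]
  set p := cs.simple i * cs.simple i' with hp
  set τ := cs.simple i' with hτ
  have hq : ∀ n : ℕ, τ * p ^ n = (p ^ n)⁻¹ * τ := by
    intro n
    induction n with
    | zero => simp
    | succ n ih =>
        have hτp : τ * p = p⁻¹ * τ := by
          rw [hp, hτ]
          simp [mul_assoc]
        have hc : (p ^ n)⁻¹ * p⁻¹ = p⁻¹ * (p ^ n)⁻¹ :=
          (((Commute.refl p).pow_right n).inv_inv).eq.symm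
        rw [pow_succ, ← mul_assoc, ih, mul_assoc, hτp, ← mul_assoc, hc, ← mul_inv_rev]
  have hcomm : ∀ x y : ℕ, p ^ x * (p ^ y)⁻¹ = (p ^ y)⁻¹ * p ^ x := by
    intro x y
    exact (((Commute.refl p).pow_pow x y).inv_right).eq
  rcases Nat.even_or_odd m with ⟨a, ha⟩ | ⟨a, ha⟩ <;>
    rcases Nat.even_or_odd k with ⟨b, hb⟩ | ⟨b, hb⟩
  · -- m = a + a, k = b + b
    rw [if_pos ⟨a + b, by omega⟩, if_pos ⟨a, ha⟩, if_pos ⟨b, hb⟩,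
      (by omega : (m + k) / 2 = a + b), (by omega : m / 2 = a), (by omega : k / 2 = b),
      pow_add]
    group
  · -- m = a + a, k = 2b + 1
    have e1 : ¬ Even (m + k) := by rw [Nat.even_iff]; omega
    have e2 : Even m := ⟨a, ha⟩
    have e3 : ¬ Even k := by rw [Nat.even_iff]; omega
    rw [if_neg e1, if_pos e2, if_neg e3,
      (by omega : (m + k) / 2 = a + b), (by omega : m / 2 = a), (by omega : k / 2 = b),
      one_mul, hq, hq, ← mul_assoc]
    congr 1
    have h1 : (p ^ a)⁻¹ = p ^ a := by
      apply inv_eq_of_mul_eq_one_right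
      rw [← pow_add, ← ha, hrel]
    rw [pow_add, mul_inv_rev, h1, ← hcomm]
  · -- m = 2a + 1, k = b + b
    have e1 : ¬ Even (m + k) := by rw [Nat.even_iff]; omega
    have e2 : ¬ Even m := by rw [Nat.even_iff]; omega
    rw [if_neg e1, if_neg e2, if_pos ⟨b, hb⟩,
      (by omega : (m + k) / 2 = a + b), (by omega : m / 2 = a), (by omega : k / 2 = b),
      one_mul, pow_add, mul_assoc]
  · -- m = 2a + 1, k = 2b + 1
    have e1 : Even (m + k) := ⟨a + b + 1, by omega⟩
    have e2 : ¬ Even m := by rw [Nat.even_iff]; omega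
    have e3 : ¬ Even k := by rw [Nat.even_iff]; omega
    rw [if_pos e1, if_neg e2, if_neg e3,
      (by omega : (m + k) / 2 = a + b + 1), (by omega : m / 2 = a), (by omega : k / 2 = b),
      one_mul]
    have hττ : τ * τ = 1 := by rw [hτ]; simp
    have h1 : p ^ b = p ^ a * p ^ (a + b + 1) := by
      rw [← pow_add, (by omega : a + (a + b + 1) = m + b), pow_add, hrel, one_mul]
    calc p ^ (a + b + 1) = (p ^ a)⁻¹ * p ^ b := by rw [h1, ← mul_assoc, inv_mul_cancel, one_mul]
    _ = (p ^ a)⁻¹ * (τ * τ) * p ^ b := by rw [hττ, mul_one]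
    _ = τ * p ^ a * (τ * p ^ b) := by rw [hq]; group

/-- One step of the sign representation on `W × ZMod 2`. -/
noncomputable def reflStep (i : S) : Equiv.Perm (W × ZMod 2) :=
  Function.Involutive.toPerm
    (fun x => (cs.simple i * x.1 * cs.simple i, x.2 + if x.1 = cs.simple i then 1 else 0))
    (by
      intro x
      have h1 : cs.simple i * (cs.simple i * x.1 * cs.simple i) * cs.simple i = x.1 := by
        simp [mul_assoc]
      have h2 : (cs.simple i * x.1 * cs.simple i = cs.simple i) ↔ (x.1 = cs.simple i) := by
        constructor
        · intro h
          have := congrArg (fun y => cs.simple i * y * cs.simple i) h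
          simpa [mul_assoc] using this
        · intro h
          rw [h]
          simp
      ext
      · exact h1
      · simp only [h2]
        by_cases hx : x.1 = cs.simple i
        · simp [hx, add_assoc, (by decide : (1 : ZMod 2) + 1 = 0)]
        · simp [hx])

lemma reflStep_apply (i : S) (t : W) (ε : ZMod 2) :
    reflStep cs i (t, ε) =
      (cs.simple i * t * cs.simple i, ε + if t = cs.simple i then 1 else 0) := rfl

/-- The sum of indicator values of the right inversion sequence. -/
noncomputable def nu (ω : List S) (t : W) : ZMod 2 :=
  ((cs.rightInvSeq ω).map (fun r => if r = t then (1 : ZMod 2) else 0)).sum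

@[simp] lemma nu_nil (t : W) : nu cs [] t = 0 := by simp [nu]

lemma nu_cons (i : S) (ω : List S) (t : W) :
    nu cs (i :: ω) t =
      (if (cs.wordProd ω)⁻¹ * cs.simple i * cs.wordProd ω = t then 1 else 0) + nu cs ω t := by
  simp only [nu, rightInvSeq, List.map_cons, List.sum_cons]

lemma prod_map_reflStep (ω : List S) (t : W) (ε : ZMod 2) :
    ((ω.map (reflStep cs)).prod) (t, ε) =
      (cs.wordProd ω * t * (cs.wordProd ω)⁻¹, ε + nu cs ω t) := by
  induction ω generalizing t ε with
  | nil => simp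
  | cons i ω ih =>
      rw [List.map_cons, List.prod_cons]
      have : (reflStep cs i * (ω.map (reflStep cs)).prod) (t, ε)
          = reflStep cs i (((ω.map (reflStep cs)).prod) (t, ε)) := rfl
      rw [this, ih, reflStep_apply, nu_cons, wordProd_cons]
      simp only [Prod.mk.injEq]
      refine ⟨?_, ?_⟩
      · simp [mul_assoc]
      ·
        have hiff : (cs.wordProd ω * t * (cs.wordProd ω)⁻¹ = cs.simple i) ↔
            ((cs.wordProd ω)⁻¹ * cs.simple i * cs.wordProd ω = t) := by
          constructor
          · intro h
            rw [← h]
            group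
          · intro h
            rw [← h]
            group
        by_cases hc : (cs.wordProd ω)⁻¹ * cs.simple i * cs.wordProd ω = t
        · rw [if_pos (hiff.mpr hc), if_pos hc]
          ring
        · rw [if_neg (fun h => hc (hiff.mp h)), if_neg hc]
          ring


lemma alternatingWord_drop (i i' : S) (n k : ℕ) :
    (alternatingWord i i' n).drop k = alternatingWord i i' (n - k) := by
  induction k generalizing n with
  | zero => simp
  | succ k ih =>
      cases n with
      | zero => simp [alternatingWord]
      | succ n =>
          rw [alternatingWord_succ' i i' n, List.drop_succ_cons, ih,
            Nat.succ_sub_succ]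

lemma ris_alternatingWord_getD (i i' : S) (n j : ℕ) (hj : j < n) :
    (cs.rightInvSeq (alternatingWord i i' n)).getD j 1 =
      (cs.wordProd (alternatingWord i i' (n - (j + 1))))⁻¹ *
        cs.wordProd (alternatingWord i i' (n - j)) := by
  have h1 : n - j = (n - (j + 1)) + 1 := by omega
  have h2 : alternatingWord i i' (n - j)
      = (if Even (n - (j + 1)) then i' else i) :: alternatingWord i i' (n - (j + 1)) := by
    rw [h1, alternatingWord_succ']
  have hdrop : (alternatingWord i i' n).drop j = alternatingWord i i' (n - j) :=
    alternatingWord_drop i i' n j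
  have hget : (alternatingWord i i' n)[j]?
      = some (if Even (n - (j + 1)) then i' else i) := by
    rw [← List.head?_drop, hdrop, h2, List.head?_cons]
  rw [getD_rightInvSeq, hget, alternatingWord_drop i i' n (j + 1)]
  rw [h2, wordProd_cons]
  simp [mul_assoc]

lemma ris_alternatingWord_period (i i' : S) (j : ℕ) (hj : j < M i i') :
    (cs.rightInvSeq (alternatingWord i i' (2 * M i i'))).getD (j + M i i') 1 =
      (cs.rightInvSeq (alternatingWord i i' (2 * M i i'))).getD j 1 := by
  set m := M i i' with hm
  rw [ris_alternatingWord_getD cs i i' (2 * m) (j + m) (by omega),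
    ris_alternatingWord_getD cs i i' (2 * m) j (by omega)]
  have e1 : 2 * m - (j + m + 1) = m - (j + 1) := by omega
  have e2 : 2 * m - (j + m) = m - j := by omega
  have e3 : 2 * m - (j + 1) = m + (m - (j + 1)) := by omega
  have e4 : 2 * m - j = m + (m - j) := by omega
  rw [e1, e2, e3, e4, wordProd_alternatingWord_add cs i i' (m - (j + 1)),
    wordProd_alternatingWord_add cs i i' (m - j)]
  rw [mul_inv_rev, mul_assoc, ← mul_assoc (cs.wordProd (alternatingWord i i' m))⁻¹,
    inv_mul_cancel, one_mul]

lemma nu_alternatingWord_braid (i i' : S) (t : W) :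
    nu cs (alternatingWord i i' (2 * M i i')) t = 0 := by
  set m := M i i' with hm
  set l := cs.rightInvSeq (alternatingWord i i' (2 * m)) with hl
  have hlen : l.length = 2 * m := by
    rw [hl, length_rightInvSeq, length_alternatingWord]
  have hdt : l.drop m = l.take m := by
    apply List.ext_getElem
    · rw [List.length_drop, List.length_take, hlen]; omega
    · intro j h1 h2
      have hjm : j < m := by
        rw [List.length_take, hlen] at h2; omega
      rw [List.getElem_drop, List.getElem_take]
      have g1 : l[m + j] = l.getD (m + j) 1 := by
        rw [List.getD_eq_getElem l 1 (by omega : m + j < l.length)]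
      have g2 : l[j]'(by omega : j < l.length) = l.getD j 1 := by
        rw [List.getD_eq_getElem l 1 (by omega : j < l.length)]
      rw [g1, g2, add_comm m j, ris_alternatingWord_period cs i i' j hjm]
  have hsplit : l = l.take m ++ l.take m := by
    conv_lhs => rw [← List.take_append_drop m l]
    rw [hdt]
  rw [nu, ← hl, hsplit, List.map_append, List.sum_append]
  exact CharTwo.add_self_eq_zero _

lemma reflStep_liftable : M.IsLiftable (reflStep cs) := by
  intro i i'
  have hpow : ∀ m : ℕ, (reflStep cs i * reflStep cs i') ^ m
      = ((alternatingWord i i' (2 * m)).map (reflStep cs)).prod := by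
    intro m
    induction m with
    | zero => simp [alternatingWord]
    | succ m ih =>
        have h : alternatingWord i i' (2 * (m + 1))
            = i :: i' :: alternatingWord i i' (2 * m) := by
          have h1 : 2 * (m + 1) = (2 * m + 1) + 1 := by ring
          rw [h1, alternatingWord_succ', alternatingWord_succ']
          have o1 : ¬ Even (2 * m + 1) := by rw [Nat.even_iff]; omega
          have o2 : Even (2 * m) := ⟨m, by ring⟩
          rw [if_neg o1, if_pos o2]
        rw [h, List.map_cons, List.map_cons, List.prod_cons, List.prod_cons, ← mul_assoc,
          ← ih, ← pow_succ']
  rw [hpow]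
  apply Equiv.ext
  rintro ⟨t, ε⟩
  rw [prod_map_reflStep]
  have h1 : cs.wordProd (alternatingWord i i' (2 * M i i')) = 1 := by
    have o2 : Even (2 * M i i') := ⟨M i i', by ring⟩
    rw [prod_alternatingWord_eq_mul_pow, if_pos o2, one_mul,
      (by omega : 2 * M i i' / 2 = M i i'), simple_mul_simple_pow]
  rw [h1, nu_alternatingWord_braid]
  simp

/-- The sign representation of the Coxeter group on `W × ZMod 2`. -/
noncomputable def signPerm : W →* Equiv.Perm (W × ZMod 2) :=
  cs.lift ⟨reflStep cs, reflStep_liftable cs⟩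

lemma signPerm_wordProd (ω : List S) :
    signPerm cs (cs.wordProd ω) = (ω.map (reflStep cs)).prod := by
  rw [signPerm, wordProd, map_list_prod, List.map_map]
  congr 1
  apply List.map_congr_left
  intro i _
  simp [Function.comp, CoxeterSystem.lift_apply_simple]

/-- The reflection cocycle. -/
noncomputable def eta (w t : W) : ZMod 2 := ((signPerm cs w) (t, 0)).2

lemma eta_wordProd (ω : List S) (t : W) : eta cs (cs.wordProd ω) t = nu cs ω t := by
  rw [eta, signPerm_wordProd, prod_map_reflStep, zero_add]

lemma signPerm_apply (w t : W) (ε : ZMod 2) :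
    (signPerm cs w) (t, ε) = (w * t * w⁻¹, ε + eta cs w t) := by
  obtain ⟨ω, rfl⟩ := cs.wordProd_surjective w
  rw [signPerm_wordProd, prod_map_reflStep, eta_wordProd]

lemma eta_mul (u v t : W) :
    eta cs (u * v) t = eta cs v t + eta cs u (v * t * v⁻¹) := by
  have h : signPerm cs (u * v) (t, 0) = signPerm cs u (signPerm cs v (t, 0)) := by
    rw [map_mul]; rfl
  rw [eta, h, signPerm_apply cs v t 0, signPerm_apply cs u, zero_add, eta]

lemma eta_simple (i : S) (t : W) :
    eta cs (cs.simple i) t = if cs.simple i = t then 1 else 0 := by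
  have h : cs.simple i = cs.wordProd [i] := by simp
  rw [h, eta_wordProd]
  simp [nu, rightInvSeq]

lemma eta_one (t : W) : eta cs 1 t = 0 := by
  simp [eta]

lemma eta_eq_zero_of_lt (n : ℕ) : ∀ (w t : W), cs.IsReflection t → cs.length w = n →
    cs.length w < cs.length (w * t) → eta cs w t = 0 := by
  induction n using Nat.strong_induction_on with
  | _ n ih =>
    intro w t ht hn hlt
    rcases eq_or_ne w 1 with rfl | hw
    · exact eta_one cs t
    · obtain ⟨i, hi⟩ := cs.exists_leftDescent_of_ne_one hw
      rw [cs.isLeftDescent_iff] at hi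
      set v := cs.simple i * w with hv
      have hw' : w = cs.simple i * v := by rw [hv]; simp
      have hlv : cs.length v + 1 = cs.length w := hi
      have hsplit : eta cs w t = eta cs v t + if cs.simple i = v * t * v⁻¹ then 1 else 0 := by
        rw [hw', eta_mul, eta_simple]
      by_cases hcase : cs.simple i = v * t * v⁻¹
      · exfalso
        have hwt : w * t = v := by
          rw [hw', hcase]
          group
          rw [mul_assoc, ht.mul_self, mul_one]
        rw [hwt] at hlt
        omega
      · rw [hsplit, if_neg hcase, add_zero]
        have hub : cs.length (w * t) ≤ cs.length (v * t) + 1 := by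
          have : w * t = cs.simple i * (v * t) := by rw [hw']; group
          rw [this]
          rcases cs.length_simple_mul (v * t) i with h | h <;> omega
        exact ih (cs.length v) (by omega) v t ht rfl (by omega)

lemma eta_self {t : W} (ht : cs.IsReflection t) : eta cs t t = 1 := by
  obtain ⟨u, i, rfl⟩ := ht
  set t := u * cs.simple i * u⁻¹ with hts
  have key : u⁻¹ * t * u = cs.simple i := by rw [hts]; group
  have h1 : eta cs t t = eta cs (cs.simple i * u⁻¹) t
      + eta cs u ((cs.simple i * u⁻¹) * t * (cs.simple i * u⁻¹)⁻¹) := by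
    have : t = u * (cs.simple i * u⁻¹) := by rw [hts]; group
    nth_rewrite 1 [this]
    rw [eta_mul]
  have harg : (cs.simple i * u⁻¹) * t * (cs.simple i * u⁻¹)⁻¹ = cs.simple i := by
    rw [mul_inv_rev, inv_inv, inv_simple, (by group : cs.simple i * u⁻¹ * t * (u * cs.simple i)
      = cs.simple i * (u⁻¹ * t * u) * cs.simple i), key]
    simp
  have h2 : eta cs (cs.simple i * u⁻¹) t = eta cs u⁻¹ t + 1 := by
    rw [eta_mul, inv_inv, key, eta_simple, if_pos rfl]
  have h3 : eta cs u⁻¹ t + eta cs u (cs.simple i) = 0 := by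
    have := eta_mul cs u u⁻¹ t
    rw [mul_inv_cancel, eta_one, inv_inv, key] at this
    exact this.symm
  rw [h1, harg, h2]
  have : eta cs u⁻¹ t + 1 + eta cs u (cs.simple i)
      = eta cs u⁻¹ t + eta cs u (cs.simple i) + 1 := by ring
  rw [this, h3, zero_add]

lemma eta_eq_one_of_lt {w t : W} (ht : cs.IsReflection t)
    (hlt : cs.length (w * t) < cs.length w) : eta cs w t = 1 := by
  set w' := w * t with hw'
  have hw : w = w' * t := by
    rw [hw', mul_assoc, ht.mul_self, mul_one]
  have h0 : eta cs w' t = 0 := by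
    apply eta_eq_zero_of_lt cs (cs.length w') w' t ht rfl
    rw [← hw]
    omega
  have h1 : eta cs (w' * t) t = eta cs t t + eta cs w' (t * t * t⁻¹) := eta_mul cs w' t t
  rw [← hw, ht.mul_self, one_mul, ht.inv, eta_self cs ht, h0] at h1
  rw [h1, add_zero]

lemma mem_rightInvSeq_of_lt (ω : List S) {t : W} (ht : cs.IsReflection t)
    (hlt : cs.length (cs.wordProd ω * t) < cs.length (cs.wordProd ω)) :
    t ∈ cs.rightInvSeq ω := by
  by_contra hmem
  have hnu : nu cs ω t = 0 := by
    apply List.sum_eq_zero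
    intro x hx
    rw [List.mem_map] at hx
    obtain ⟨r, hr, rfl⟩ := hx
    rw [if_neg (fun h => hmem (by rw [← h]; exact hr))]
  have h1 : eta cs (cs.wordProd ω) t = 0 := by rw [eta_wordProd, hnu]
  rw [eta_eq_one_of_lt cs ht hlt] at h1
  exact one_ne_zero h1

lemma exists_rightExchange (ω : List S) {t : W} (ht : cs.IsReflection t)
    (hlt : cs.length (cs.wordProd ω * t) < cs.length (cs.wordProd ω)) :
    ∃ j < ω.length, cs.wordProd ω * t = cs.wordProd (ω.eraseIdx j) := by
  have hmem := mem_rightInvSeq_of_lt cs ω ht hlt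
  rw [List.mem_iff_getElem] at hmem
  obtain ⟨j, hj, hget⟩ := hmem
  have hjl : j < ω.length := by
    rw [length_rightInvSeq] at hj
    exact hj
  refine ⟨j, hjl, ?_⟩
  rw [← cs.wordProd_mul_getD_rightInvSeq ω j]
  congr 1
  rw [List.getD_eq_getElem _ _ hj, hget]

lemma exists_leftExchange (ω : List S) {t : W} (ht : cs.IsReflection t)
    (hlt : cs.length (t * cs.wordProd ω) < cs.length (cs.wordProd ω)) :
    ∃ j < ω.length, t * cs.wordProd ω = cs.wordProd (ω.eraseIdx j) := by
  have hrev : cs.length (cs.wordProd ω.reverse * t) < cs.length (cs.wordProd ω.reverse) := by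
    rw [wordProd_reverse]
    have h1 : (cs.wordProd ω)⁻¹ * t = (t * cs.wordProd ω)⁻¹ := by
      rw [mul_inv_rev, ht.inv]
    rw [h1, cs.length_inv, cs.length_inv]
    exact hlt
  have hmem := mem_rightInvSeq_of_lt cs ω.reverse ht hrev
  rw [cs.rightInvSeq_reverse, List.mem_reverse] at hmem
  rw [List.mem_iff_getElem] at hmem
  obtain ⟨j, hj, hget⟩ := hmem
  have hjl : j < ω.length := by
    rw [length_leftInvSeq] at hj
    exact hj
  refine ⟨j, hjl, ?_⟩
  rw [← cs.getD_leftInvSeq_mul_wordProd ω j]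
  congr 1
  rw [List.getD_eq_getElem _ _ hj, hget]

lemma isReduced_nil : cs.IsReduced ([] : List S) := by
  simp [CoxeterSystem.IsReduced]

/-- Deletion property. -/
lemma exists_sublist_of_not_isReduced (ω : List S) (h : ¬ cs.IsReduced ω) :
    ∃ ω' : List S, ω' <+ ω ∧ cs.wordProd ω' = cs.wordProd ω ∧ ω'.length + 2 = ω.length := by
  have hne : ω ≠ [] := by
    rintro rfl
    exact h (isReduced_nil cs)
  have hlen1 : 1 ≤ ω.length := by
    cases ω with
    | nil => exact absurd rfl hne
    | cons a l => simp
  have hP : ∃ k, ¬ cs.IsReduced (ω.take (k + 1)) := by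
    refine ⟨ω.length - 1, ?_⟩
    rwa [(by omega : ω.length - 1 + 1 = ω.length), List.take_length]
  obtain ⟨k, hk, hmin⟩ : ∃ k, ¬ cs.IsReduced (ω.take (k + 1))
      ∧ ∀ j, j < k → cs.IsReduced (ω.take (j + 1)) := by
    refine ⟨Nat.find hP, Nat.find_spec hP, ?_⟩
    intro j hj
    by_contra hcon
    exact absurd hj (not_lt.mpr (Nat.find_min' hP hcon))
  have hkle : k ≤ ω.length - 1 := by
    by_contra hcon
    push_neg at hcon
    have hred := hmin (ω.length - 1) (by omega)
    rw [(by omega : ω.length - 1 + 1 = ω.length), List.take_length] at hred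
    exact h hred
  have hklt : k < ω.length := by omega
  have htk : cs.IsReduced (ω.take k) := by
    cases k with
    | zero => simpa using isReduced_nil cs
    | succ j => exact hmin j (by omega)
  set i := ω[k]'hklt with hidef
  have htake : ω.take (k + 1) = ω.take k ++ [i] := by
    rw [List.take_succ, List.getElem?_eq_getElem hklt]
    rfl
  have hlentk : (ω.take k).length = k := by
    rw [List.length_take]
    omega
  have hlu : cs.length (cs.wordProd (ω.take k)) = k := by
    rw [htk, hlentk]
  have hprod : cs.wordProd (ω.take (k + 1)) = cs.wordProd (ω.take k) * cs.simple i := by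
    rw [htake, wordProd_append, wordProd_singleton]
  have hnotred : cs.length (cs.wordProd (ω.take k) * cs.simple i) ≠ k + 1 := by
    intro hcon
    apply hk
    rw [CoxeterSystem.IsReduced, hprod, hcon, htake]
    simp [hlentk]
  have hlt : cs.length (cs.wordProd (ω.take k) * cs.simple i)
      < cs.length (cs.wordProd (ω.take k)) := by
    rcases cs.length_mul_simple (cs.wordProd (ω.take k)) i with hh | hh <;> omega
  obtain ⟨j, hjk, hexch⟩ := exists_rightExchange cs (ω.take k)
    (cs.isReflection_simple i) hlt
  rw [hlentk] at hjk
  refine ⟨(ω.take k).eraseIdx j ++ ω.drop (k + 1), ?_, ?_, ?_⟩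
  · have h1 : (ω.take k).eraseIdx j <+ ω.take k := List.eraseIdx_sublist _ _
    have h2 : ω.take k <+ ω.take (k + 1) := by
      rw [htake]
      exact List.sublist_append_left _ _
    have h3 : (ω.take k).eraseIdx j ++ ω.drop (k + 1) <+ ω.take (k + 1) ++ ω.drop (k + 1) :=
      List.Sublist.append (h1.trans h2) (List.Sublist.refl _)
    rwa [List.take_append_drop] at h3
  · rw [wordProd_append, ← hexch, ← hprod, ← wordProd_append, List.take_append_drop]
  · rw [List.length_append, List.length_eraseIdx, if_pos (by omega : j < (ω.take k).length),
      hlentk, List.length_drop]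
    omega

/-- Any word can be replaced by a reduced sublist-word with the same product. -/
lemma exists_reduced_sublist (ω : List S) :
    ∃ ω' : List S, ω' <+ ω ∧ cs.IsReduced ω' ∧ cs.wordProd ω' = cs.wordProd ω := by
  generalize hn : ω.length = n
  induction n using Nat.strong_induction_on generalizing ω with
  | _ n ih =>
    by_cases hred : cs.IsReduced ω
    · exact ⟨ω, List.Sublist.refl _, hred, rfl⟩
    · obtain ⟨ω₁, hsub, hprod, hlen⟩ := exists_sublist_of_not_isReduced cs ω hred
      obtain ⟨ω', hsub', hred', hprod'⟩ := ih ω₁.length (by omega) ω₁ rfl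
      exact ⟨ω', hsub'.trans hsub, hred', hprod'.trans hprod⟩

end DGM

namespace DGM

open CoxeterSystem List

variable {S : Type*} {W : Type*} [Group W] {M : CoxeterMatrix S}

/-- The standard parabolic subgroup `W_I` of `W`, generated by the simple
reflections indexed by `I ⊆ S`. -/
def WP (cs : CoxeterSystem M W) (I : Set S) : Subgroup W :=
  Subgroup.closure (cs.simple '' I)

/-- A parabolic subgroup of `W`: a subgroup of the form `v W_I v⁻¹`. -/
def IsParabolic (cs : CoxeterSystem M W) (H : Subgroup W) : Prop :=
  ∃ (v : W) (I : Set S), H = (WP cs I).map (MulAut.conj v).toMonoidHom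

variable (cs : CoxeterSystem M W)

lemma wordProd_mem_WP {I : Set S} {ω : List S} (hω : ∀ i ∈ ω, i ∈ I) :
    cs.wordProd ω ∈ WP cs I := by
  induction ω with
  | nil => simpa using Subgroup.one_mem _
  | cons i ω ih =>
      rw [wordProd_cons]
      refine Subgroup.mul_mem _ ?_ (ih (fun a ha => hω a (List.mem_cons_of_mem i ha)))
      exact Subgroup.subset_closure ⟨i, hω i (List.mem_cons_self), rfl⟩

lemma simple_mem_WP {I : Set S} {i : S} (hi : i ∈ I) : cs.simple i ∈ WP cs I :=
  Subgroup.subset_closure ⟨i, hi, rfl⟩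

lemma exists_word_of_mem_WP {I : Set S} {w : W} (hw : w ∈ WP cs I) :
    ∃ ω : List S, (∀ i ∈ ω, i ∈ I) ∧ w = cs.wordProd ω := by
  induction hw using Subgroup.closure_induction with
  | mem x hx =>
      obtain ⟨i, hi, rfl⟩ := hx
      exact ⟨[i], by simpa using hi, by simp⟩
  | one => exact ⟨[], by simp, by simp⟩
  | mul x y hx hy ihx ihy =>
      obtain ⟨ω₁, h₁, rfl⟩ := ihx
      obtain ⟨ω₂, h₂, rfl⟩ := ihy
      refine ⟨ω₁ ++ ω₂, ?_, by rw [wordProd_append]⟩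
      intro a ha
      rcases List.mem_append.mp ha with h | h
      · exact h₁ a h
      · exact h₂ a h
  | inv x hx ihx =>
      obtain ⟨ω, h₁, rfl⟩ := ihx
      refine ⟨ω.reverse, ?_, by rw [wordProd_reverse]⟩
      intro a ha
      exact h₁ a (List.mem_reverse.mp ha)

lemma exists_reduced_word_of_mem_WP {I : Set S} {w : W} (hw : w ∈ WP cs I) :
    ∃ ω : List S, (∀ i ∈ ω, i ∈ I) ∧ cs.IsReduced ω ∧ w = cs.wordProd ω := by
  obtain ⟨ω, hω, rfl⟩ := exists_word_of_mem_WP cs hw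
  obtain ⟨ω', hsub, hred, hprod⟩ := exists_reduced_sublist cs ω
  exact ⟨ω', fun i hi => hω i (hsub.subset hi), hred, hprod.symm⟩

lemma eq_simple_of_mem_WP_length_one {I : Set S} {z : W} (hz : z ∈ WP cs I)
    (h1 : cs.length z = 1) : ∃ j ∈ I, z = cs.simple j := by
  obtain ⟨ω, hω, hred, rfl⟩ := exists_reduced_word_of_mem_WP cs hz
  have hlen : ω.length = 1 := by
    rw [CoxeterSystem.IsReduced] at hred
    omega
  obtain ⟨j, rfl⟩ : ∃ j, ω = [j] := by
    cases ω with
    | nil => simp at hlen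
    | cons a l =>
        cases l with
        | nil => exact ⟨a, rfl⟩
        | cons b l' => simp at hlen
  exact ⟨j, hω j (List.mem_cons_self), by simp⟩

/-- Length is additive on `d * u` for `u` in `W_J`, when `d` has minimal length in `d W_J`. -/
lemma length_mul_of_min_right {J : Set S} {d : W}
    (hd : ∀ u ∈ WP cs J, cs.length d ≤ cs.length (d * u)) :
    ∀ u ∈ WP cs J, cs.length (d * u) = cs.length d + cs.length u := by
  suffices h : ∀ n : ℕ, ∀ u ∈ WP cs J, cs.length u = n →
      cs.length (d * u) = cs.length d + cs.length u by
    intro u hu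
    exact h (cs.length u) u hu rfl
  intro n
  induction n using Nat.strong_induction_on with
  | _ n ih =>
    intro u hu hn
    obtain ⟨ω, hω, hred, rfl⟩ := exists_reduced_word_of_mem_WP cs hu
    rcases List.eq_nil_or_concat ω with rfl | ⟨ω', j, rfl⟩
    · simp
    · rw [List.concat_eq_append] at *
      have hred' : cs.IsReduced ω' := by
        have := hred.take ω'.length
        rwa [List.take_left] at this
      have hω' : ∀ i ∈ ω', i ∈ J := fun i hi => hω i (List.mem_append_left _ hi)
      have hu' : cs.wordProd ω' ∈ WP cs J := wordProd_mem_WP cs hω'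
      have hj : j ∈ J := hω j (List.mem_append_right _ (List.mem_cons_self))
      have hsplit : cs.wordProd (ω' ++ [j]) = cs.wordProd ω' * cs.simple j := by
        rw [wordProd_append, wordProd_singleton]
      have hlen' : cs.length (cs.wordProd ω') = ω'.length := hred'
      have hlen : cs.length (cs.wordProd (ω' ++ [j])) = ω'.length + 1 := by
        rw [hred]
        simp
      have hIH : cs.length (d * cs.wordProd ω') = cs.length d + ω'.length := by
        have := ih (cs.length (cs.wordProd ω')) (by omega) (cs.wordProd ω') hu' rfl
        omega
      have hlen2 : cs.length (cs.wordProd ω' * cs.simple j) = ω'.length + 1 := by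
        rw [← hsplit]; exact hlen
      rcases cs.length_mul_simple (d * cs.wordProd ω') j with hcase | hcase
      · -- length goes up: done
        rw [hsplit, ← mul_assoc]
        omega
      · -- length goes down: contradiction
        exfalso
        obtain ⟨ωd, hredd, hdw⟩ := cs.exists_reduced_word' d
        have hprodfull : cs.wordProd (ωd ++ ω') = d * cs.wordProd ω' := by
          rw [wordProd_append, ← hdw]
        have hltfull : cs.length (cs.wordProd (ωd ++ ω') * cs.simple j)
            < cs.length (cs.wordProd (ωd ++ ω')) := by
          rw [hprodfull]
          omega
        obtain ⟨j₀, hj₀, hexch⟩ := exists_rightExchange cs (ωd ++ ω')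
          (cs.isReflection_simple j) hltfull
        rw [hprodfull] at hexch
        have hlend : ωd.length = cs.length d := by
          rw [hdw]; exact hredd.symm
        rcases lt_or_ge j₀ ωd.length with hcse | hcse
        · rw [List.eraseIdx_append_of_lt_length hcse] at hexch
          rw [wordProd_append] at hexch
          -- d * π ω' * s j = π (ωd.eraseIdx j₀) * π ω'
          have he : cs.wordProd (ωd.eraseIdx j₀)
              = d * (cs.wordProd ω' * cs.simple j * (cs.wordProd ω')⁻¹) := by
            apply mul_right_cancel (b := cs.wordProd ω')
            rw [← hexch]
            group
          have hmem : cs.wordProd ω' * cs.simple j * (cs.wordProd ω')⁻¹ ∈ WP cs J :=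
            Subgroup.mul_mem _ (Subgroup.mul_mem _ hu' (simple_mem_WP cs hj))
              (Subgroup.inv_mem _ hu')
          have hge := hd _ hmem
          rw [← he] at hge
          have hle := cs.length_wordProd_le (ωd.eraseIdx j₀)
          rw [List.length_eraseIdx, if_pos hcse] at hle
          omega
        · rw [List.eraseIdx_append_of_length_le hcse] at hexch
          rw [wordProd_append] at hexch
          have he : cs.wordProd ω' * cs.simple j = cs.wordProd (ω'.eraseIdx (j₀ - ωd.length)) := by
            rw [← hdw] at hexch
            have := hexch
            rw [mul_assoc] at this
            exact mul_left_cancel this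
          have hle := cs.length_wordProd_le (ω'.eraseIdx (j₀ - ωd.length))
          rw [List.length_eraseIdx, if_pos (by
            rw [List.length_append] at hj₀
            omega : j₀ - ωd.length < ω'.length)] at hle
          rw [← he] at hle
          rw [← hsplit] at hle
          omega

lemma length_mul_of_min_left {I : Set S} {d : W}
    (hd : ∀ x ∈ WP cs I, cs.length d ≤ cs.length (x * d)) :
    ∀ x ∈ WP cs I, cs.length (x * d) = cs.length x + cs.length d := by
  have hd' : ∀ u ∈ WP cs I, cs.length d⁻¹ ≤ cs.length (d⁻¹ * u) := by
    intro u hu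
    have h1 := hd u⁻¹ (Subgroup.inv_mem _ hu)
    rw [cs.length_inv]
    calc cs.length d ≤ cs.length (u⁻¹ * d) := h1
    _ = cs.length ((u⁻¹ * d)⁻¹) := (cs.length_inv _).symm
    _ = cs.length (d⁻¹ * u) := by rw [mul_inv_rev, inv_inv]
  intro x hx
  have := length_mul_of_min_right cs hd' x⁻¹ (Subgroup.inv_mem _ hx)
  rw [show d⁻¹ * x⁻¹ = (x * d)⁻¹ from (mul_inv_rev x d).symm, cs.length_inv, cs.length_inv,
    cs.length_inv] at this
  omega

lemma map_conj_map_conj (v x : W) (H : Subgroup W) :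
    (H.map (MulAut.conj x).toMonoidHom).map (MulAut.conj v).toMonoidHom
      = H.map (MulAut.conj (v * x)).toMonoidHom := by
  rw [Subgroup.map_map]
  congr 1
  ext g
  simp [mul_assoc]

lemma map_conj_self_of_mem {H : Subgroup W} {y : W} (hy : y ∈ H) :
    H.map (MulAut.conj y).toMonoidHom = H := by
  apply _root_.le_antisymm
  · rintro _ ⟨a, ha, rfl⟩
    simpa [mul_assoc] using H.mul_mem (H.mul_mem hy ha) (H.inv_mem hy)
  · intro a ha
    refine ⟨y⁻¹ * a * y, H.mul_mem (H.mul_mem (H.inv_mem hy) ha) hy, ?_⟩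
    simp [mul_assoc]

/-- Kilmoyer's theorem: if `d` has minimal length in the double coset `W_I d W_J`, then
`W_I ∩ d W_J d⁻¹` is the standard parabolic subgroup on
`K = {i ∈ I : s i = d s j d⁻¹ for some j ∈ J}`. -/
theorem WP_inf_map_conj_WP (cs : CoxeterSystem M W) (I J : Set S) (d : W)
    (hd : ∀ x ∈ WP cs I, ∀ y ∈ WP cs J, cs.length d ≤ cs.length (x * d * y)) :
    WP cs I ⊓ (WP cs J).map (MulAut.conj d).toMonoidHom
      = WP cs {i : S | i ∈ I ∧ ∃ j ∈ J, cs.simple i = d * cs.simple j * d⁻¹} := by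
  set K := {i : S | i ∈ I ∧ ∃ j ∈ J, cs.simple i = d * cs.simple j * d⁻¹} with hK
  have hdR : ∀ u ∈ WP cs J, cs.length d ≤ cs.length (d * u) := by
    intro u hu
    simpa using hd 1 (Subgroup.one_mem _) u hu
  have hdL : ∀ x ∈ WP cs I, cs.length d ≤ cs.length (x * d) := by
    intro x hx
    simpa using hd x hx 1 (Subgroup.one_mem _)
  have lenR := length_mul_of_min_right cs hdR
  have lenL := length_mul_of_min_left cs hdL
  apply _root_.le_antisymm
  · -- hard direction
    have aux : ∀ n : ℕ, ∀ w : W, cs.length w = n → w ∈ WP cs I →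
        w ∈ (WP cs J).map (MulAut.conj d).toMonoidHom → w ∈ WP cs K := by
      intro n
      induction n using Nat.strong_induction_on with
      | _ n ih =>
        intro w hn hwI hwmap
        rcases eq_or_ne w 1 with rfl | hw1
        · exact Subgroup.one_mem _
        obtain ⟨y, hy, hyw⟩ := hwmap
        simp only [MulEquiv.coe_toMonoidHom, MulAut.conj_apply] at hyw
        obtain ⟨ω, hωI, hred, hw_eq⟩ := exists_reduced_word_of_mem_WP cs hwI
        have hωne : ω ≠ [] := by
          rintro rfl
          exact hw1 (by simpa using hw_eq)
        obtain ⟨i, ω₂, rfl⟩ := List.exists_cons_of_ne_nil hωne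
        have hiI : i ∈ I := hωI i (List.mem_cons_self)
        set v := cs.wordProd ω₂ with hv
        have hv_eq : w = cs.simple i * v := by rw [hw_eq, wordProd_cons]
        have hsiw : cs.simple i * w = v := by
          rw [hv_eq, simple_mul_simple_cancel_left]
        have hredtail : cs.IsReduced ω₂ := by
          have h2 := hred.drop (j := 1)
          simpa using h2
        have hvI : v ∈ WP cs I :=
          wordProd_mem_WP cs (fun a ha => hωI a (List.mem_cons_of_mem i ha))
        have hlw : cs.length w = ω₂.length + 1 := by
          rw [hw_eq, hred]
          simp
        have hlv : cs.length v = ω₂.length := hredtail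
        have hwd : w * d = d * y := by rw [← hyw]; group
        have hlwd : cs.length (w * d) = cs.length w + cs.length d := lenL w hwI
        have hldy : cs.length (d * y) = cs.length d + cs.length y := lenR y hy
        have hlvd : cs.length (v * d) = cs.length v + cs.length d := lenL v hvI
        obtain ⟨ωd, hredd, hdw⟩ := cs.exists_reduced_word' d
        obtain ⟨ωy, hωyJ, hredy, hy_eq⟩ := exists_reduced_word_of_mem_WP cs hy
        have hprodfull : cs.wordProd (ωd ++ ωy) = d * y := by
          rw [wordProd_append, ← hdw, ← hy_eq]
        have hlt : cs.length (cs.simple i * cs.wordProd (ωd ++ ωy))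
            < cs.length (cs.wordProd (ωd ++ ωy)) := by
          rw [hprodfull]
          have hh : cs.simple i * (d * y) = v * d := by
            rw [← hwd, ← hsiw]
            group
          rw [hh, hlvd, ← hwd, hlwd]
          omega
        obtain ⟨j₀, hj₀, hexch⟩ := exists_leftExchange cs (ωd ++ ωy)
          (cs.isReflection_simple i) hlt
        rw [hprodfull] at hexch
        have hlend : ωd.length = cs.length d := by rw [hdw]; exact hredd.symm
        rcases lt_or_ge j₀ ωd.length with hcse | hcse
        · exfalso
          rw [List.eraseIdx_append_of_lt_length hcse, wordProd_append, ← hy_eq] at hexch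
          have he : cs.wordProd (ωd.eraseIdx j₀) = cs.simple i * d := by
            apply mul_right_cancel (b := y)
            rw [← hexch]
            group
          have hge := hd (cs.simple i) (simple_mem_WP cs hiI) 1 (Subgroup.one_mem _)
          rw [mul_one, ← he] at hge
          have hle := cs.length_wordProd_le (ωd.eraseIdx j₀)
          rw [List.length_eraseIdx, if_pos hcse] at hle
          omega
        · rw [List.eraseIdx_append_of_length_le hcse, wordProd_append] at hexch
          set z := d⁻¹ * cs.simple i * d with hz
          have hzy : z * y = cs.wordProd (ωy.eraseIdx (j₀ - ωd.length)) := by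
            rw [← hdw] at hexch
            rw [hz]
            apply mul_left_cancel (a := d)
            rw [← hexch]
            group
          have hzmem : z ∈ WP cs J := by
            have h1 : cs.wordProd (ωy.eraseIdx (j₀ - ωd.length)) ∈ WP cs J := by
              apply wordProd_mem_WP
              intro a ha
              exact hωyJ a ((List.eraseIdx_sublist _ _).subset ha)
            have h2 : z = cs.wordProd (ωy.eraseIdx (j₀ - ωd.length)) * y⁻¹ := by
              rw [← hzy]
              group
            rw [h2]
            exact Subgroup.mul_mem _ h1 (Subgroup.inv_mem _ hy)
          have hsd : cs.simple i * d = d * z := by rw [hz]; group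
          have hlz : cs.length z = 1 := by
            have h1 : cs.length (cs.simple i * d) = cs.length (cs.simple i) + cs.length d :=
              lenL (cs.simple i) (simple_mem_WP cs hiI)
            have h2 : cs.length (d * z) = cs.length d + cs.length z := lenR z hzmem
            rw [hsd] at h1
            rw [cs.length_simple] at h1
            omega
          obtain ⟨j, hjJ, hzj⟩ := eq_simple_of_mem_WP_length_one cs hzmem hlz
          have hiK : i ∈ K := by
            refine ⟨hiI, j, hjJ, ?_⟩
            rw [← hzj, hz]
            group
          have hvmap : v ∈ (WP cs J).map (MulAut.conj d).toMonoidHom := by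
            refine ⟨z * y, Subgroup.mul_mem _ hzmem hy, ?_⟩
            simp only [MulEquiv.coe_toMonoidHom, MulAut.conj_apply]
            have hdzd : d * z * d⁻¹ = cs.simple i := by
              rw [← hsd]
              group
            calc d * (z * y) * d⁻¹ = (d * z * d⁻¹) * (d * y * d⁻¹) := by group
            _ = cs.simple i * w := by rw [hdzd, hyw]
            _ = v := hsiw
          have hvK : v ∈ WP cs K := ih (cs.length v) (by omega) v rfl hvI hvmap
          have hsiK : cs.simple i ∈ WP cs K := simple_mem_WP cs hiK
          rw [hv_eq]
          exact Subgroup.mul_mem _ hsiK hvK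
    intro w hw
    rw [Subgroup.mem_inf] at hw
    exact aux (cs.length w) w rfl hw.1 hw.2
  · -- easy direction
    rw [WP]
    rw [Subgroup.closure_le]
    rintro _ ⟨i, ⟨hiI, j, hjJ, hconj⟩, rfl⟩
    rw [SetLike.mem_coe, Subgroup.mem_inf]
    constructor
    · exact simple_mem_WP cs hiI
    · refine ⟨cs.simple j, simple_mem_WP cs hjJ, ?_⟩
      simp only [MulEquiv.coe_toMonoidHom, MulAut.conj_apply]
      exact hconj.symm

/-- Existence of a minimal-length representative of a double coset. -/
lemma exists_min_double_coset (cs : CoxeterSystem M W) (I J : Set S) (u : W) :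
    ∃ x ∈ WP cs I, ∃ y ∈ WP cs J, ∃ d : W, u = x * d * y ∧
      ∀ a ∈ WP cs I, ∀ b ∈ WP cs J, cs.length d ≤ cs.length (a * d * b) := by
  have hP : ∃ n : ℕ, ∃ a ∈ WP cs I, ∃ b ∈ WP cs J, cs.length (a * u * b) = n :=
    ⟨cs.length u, 1, Subgroup.one_mem _, 1, Subgroup.one_mem _, by simp⟩
  obtain ⟨a, ha, b, hb, hab⟩ := Nat.find_spec hP
  refine ⟨a⁻¹, Subgroup.inv_mem _ ha, b⁻¹, Subgroup.inv_mem _ hb, a * u * b, by group, ?_⟩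
  intro a' ha' b' hb'
  rw [hab]
  apply Nat.find_min' hP
  refine ⟨a' * a, Subgroup.mul_mem _ ha' ha, b * b', Subgroup.mul_mem _ hb hb', ?_⟩
  congr 1
  group

/-- The intersection of any two parabolic subgroups of `W` is a parabolic subgroup. -/
theorem isParabolic_inf (cs : CoxeterSystem M W) (P Q : Subgroup W)
    (hP : IsParabolic cs P) (hQ : IsParabolic cs Q) :
    IsParabolic cs (P ⊓ Q) := by
  obtain ⟨v, I, rfl⟩ := hP
  obtain ⟨w, J, rfl⟩ := hQ
  obtain ⟨x, hx, y, hy, d, hu, hmin⟩ := exists_min_double_coset cs I J (v⁻¹ * w)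
  have hw : w = v * (x * d * y) := by rw [← hu]; group
  have hQ2 : (WP cs J).map (MulAut.conj w).toMonoidHom
      = ((WP cs J).map (MulAut.conj d).toMonoidHom).map
          (MulAut.conj (v * x)).toMonoidHom := by
    rw [map_conj_map_conj]
    have h1 : (WP cs J).map (MulAut.conj y).toMonoidHom = WP cs J := map_conj_self_of_mem hy
    calc (WP cs J).map (MulAut.conj w).toMonoidHom
        = ((WP cs J).map (MulAut.conj y).toMonoidHom).map
            (MulAut.conj (v * x * d)).toMonoidHom := by
          rw [map_conj_map_conj, hw]
          congr 2
          group
    _ = (WP cs J).map (MulAut.conj (v * x * d)).toMonoidHom := by rw [h1]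
    _ = (WP cs J).map (MulAut.conj (v * x * d)).toMonoidHom := rfl
  have hP2 : (WP cs I).map (MulAut.conj v).toMonoidHom
      = (WP cs I).map (MulAut.conj (v * x)).toMonoidHom := by
    conv_lhs => rw [← map_conj_self_of_mem hx]
    rw [map_conj_map_conj]
  rw [hP2, hQ2, ← Subgroup.map_inf _ _ _ (MulAut.conj (v * x)).injective]
  rw [WP_inf_map_conj_WP cs I J d hmin]
  exact ⟨v * x, _, rfl⟩

end DGM
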